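/- For ε, δ ∈ [0,1] with ε + δ > 0, let θ = δ/(ε+δ), and let S ⊆ [n] with values x_i ∈ [0,1], ∑_{i∈S} x_i ≤ 1. Partition S into L (the 'low' part, itself partitioned into bins B with ∑_{i∈B} x_i ≥ (1-θ)/2 for all bins except possibly one bin B*) and H = S∖L. Suppose f(z) := exp(-z(1+δ)) - (1 - z(1-ε)) ≥ 0 for all z ≥ (1-θ)/2. Then 1 - exp(-(1+δ)∑_{i∈H} x_i) · ∏_{B bin of L} (1 - (1-ε)∑_{i∈B} x_i) ≥ [1 - exp(-1-δ+(ε+δ)/(1-ε)) · (1-ε)/(1+δ)] · ∑_{i∈S} x_i, provided ∑_{i∈S} x_i = 1. -/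

import Mathlib

lemma key16 (a b y : ℝ) (ha : 0 < a) (hb : 0 < b) :
    Real.exp (-a * (1 - y)) * (1 - b * y) ≤ Real.exp (-a + (a-b)/b) * (b/a) := by
  set t : ℝ := a * ((a-b)/(a*b)) - a * y with ht
  have h1 := Real.add_one_le_exp t
  have harg : -a + (a-b)/b = -a*(1-y) + t := by
    rw [ht]; field_simp; ring
  rw [harg, Real.exp_add, mul_assoc]
  have hpos := Real.exp_pos (-a*(1-y))
  have h2 : 1 - b * y ≤ Real.exp t * (b/a) := by
    have hba : 0 < b / a := div_pos hb ha
    have h3 : (t + 1) * (b/a) ≤ Real.exp t * (b/a) :=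
      mul_le_mul_of_nonneg_right h1 hba.le
    refine le_trans (le_of_eq ?_) h3
    rw [ht]; field_simp; ring
  exact mul_le_mul_of_nonneg_left h2 hpos.le

theorem stmt16 {ι : Type*} [DecidableEq ι]
    (ε δ : ℝ) (hε : ε ∈ Set.Ico (0:ℝ) 1) (hδ : δ ∈ Set.Icc (0:ℝ) 1)
    (hpos : 0 < ε + δ) (θ : ℝ) (hθ : θ = δ / (ε + δ))
    (S L H : Finset ι)
    (x : ι → ℝ) (hx : ∀ i, x i ∈ Set.Icc (0:ℝ) 1)
    (hsum : ∑ i ∈ S, x i = 1)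
    (hLH : Disjoint L H) (hS : S = L ∪ H)
    (bins : Finset (Finset ι))
    (hbinsL : ∀ B ∈ bins, B ⊆ L)
    (hcover : L = bins.biUnion id)
    (hdisj : ∀ B ∈ bins, ∀ B' ∈ bins, B ≠ B' → Disjoint B B')
    (Bstar : Finset ι)
    (hheavy : ∀ B ∈ bins, B ≠ Bstar → (1 - θ) / 2 ≤ ∑ i ∈ B, x i)
    (hf : ∀ z : ℝ, (1 - θ) / 2 ≤ z →
      0 ≤ Real.exp (-z * (1 + δ)) - (1 - z * (1 - ε))) :
    (1 - Real.exp (-1 - δ + (ε + δ) / (1 - ε)) * ((1 - ε) / (1 + δ))) * ∑ i ∈ S, x i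
      ≤ 1 - Real.exp (-(1 + δ) * ∑ i ∈ H, x i)
            * ∏ B ∈ bins, (1 - (1 - ε) * ∑ i ∈ B, x i) := by
  obtain ⟨hε0, hε1⟩ := hε
  obtain ⟨hδ0, hδ1⟩ := hδ
  set a : ℝ := 1 + δ with ha
  set b : ℝ := 1 - ε with hb
  have hapos : 0 < a := by positivity
  have hbpos : 0 < b := by linarith
  have hxnn : ∀ i, 0 ≤ x i := fun i => (hx i).1
  -- sums
  have hLS : L ⊆ S := hS ▸ Finset.subset_union_left
  have hsub : ∀ B ∈ bins, ∑ i ∈ B, x i ≤ 1 := by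
    intro B hB
    calc ∑ i ∈ B, x i ≤ ∑ i ∈ S, x i :=
          Finset.sum_le_sum_of_subset_of_nonneg ((hbinsL B hB).trans hLS)
            (fun i _ _ => hxnn i)
      _ = 1 := hsum
  have hbnn : ∀ B ∈ bins, 0 ≤ 1 - b * ∑ i ∈ B, x i := by
    intro B hB
    have h1 := hsub B hB
    have h2 : 0 ≤ ∑ i ∈ B, x i := Finset.sum_nonneg fun i _ => hxnn i
    nlinarith [mul_le_one₀ (by linarith : b ≤ 1) h2 h1]
  have hLsum : ∑ i ∈ L, x i = ∑ B ∈ bins, ∑ i ∈ B, x i := by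
    rw [hcover]
    exact Finset.sum_biUnion (fun B hB B' hB' hne => hdisj B hB B' hB' hne)
  have htotal : ∑ i ∈ H, x i + ∑ B ∈ bins, ∑ i ∈ B, x i = 1 := by
    rw [← hLsum, ← hsum, hS, Finset.sum_union hLH]; ring
  have hheavy' : ∀ B ∈ bins, B ≠ Bstar →
      1 - b * ∑ i ∈ B, x i ≤ Real.exp (-a * ∑ i ∈ B, x i) := by
    intro B hB hne
    have h1 := hf (∑ i ∈ B, x i) (hheavy B hB hne)
    have heq : -a * (∑ i ∈ B, x i) = -(∑ i ∈ B, x i) * a := by ring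
    rw [ha, hb] at h1 ⊢
    rw [show -(1+δ) * (∑ i ∈ B, x i) = -(∑ i ∈ B, x i) * (1+δ) by ring]
    nlinarith [h1]
  -- main product bound, with y = mass of Bstar (0 if absent)
  set hH : ℝ := ∑ i ∈ H, x i with hHdef
  have hkey : ∃ y : ℝ, 0 ≤ y ∧ y ≤ 1 ∧
      Real.exp (-a * hH) * ∏ B ∈ bins, (1 - b * ∑ i ∈ B, x i)
        ≤ Real.exp (-a * (1 - y)) * (1 - b * y) := by
    by_cases hBst : Bstar ∈ bins
    · refine ⟨∑ i ∈ Bstar, x i, Finset.sum_nonneg fun i _ => hxnn i, hsub _ hBst, ?_⟩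
      rw [← Finset.mul_prod_erase bins _ hBst]
      have hprod : ∏ B ∈ bins.erase Bstar, (1 - b * ∑ i ∈ B, x i)
          ≤ ∏ B ∈ bins.erase Bstar, Real.exp (-a * ∑ i ∈ B, x i) := by
        apply Finset.prod_le_prod
        · intro B hB; exact hbnn B (Finset.mem_of_mem_erase hB)
        · intro B hB
          exact hheavy' B (Finset.mem_of_mem_erase hB) (Finset.ne_of_mem_erase hB)
      have hexp : ∏ B ∈ bins.erase Bstar, Real.exp (-a * ∑ i ∈ B, x i)
          = Real.exp (-a * ∑ B ∈ bins.erase Bstar, ∑ i ∈ B, x i) := by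
        rw [← Real.exp_sum, ← Finset.mul_sum]
      have hsplit : ∑ i ∈ Bstar, x i + ∑ B ∈ bins.erase Bstar, ∑ i ∈ B, x i
          = ∑ B ∈ bins, ∑ i ∈ B, x i := Finset.add_sum_erase bins (fun B => ∑ i ∈ B, x i) hBst
      have hstarnn : 0 ≤ 1 - b * ∑ i ∈ Bstar, x i := hbnn Bstar hBst
      calc Real.exp (-a * hH) * ((1 - b * ∑ i ∈ Bstar, x i) *
              ∏ B ∈ bins.erase Bstar, (1 - b * ∑ i ∈ B, x i))
          ≤ Real.exp (-a * hH) * ((1 - b * ∑ i ∈ Bstar, x i) *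
              Real.exp (-a * ∑ B ∈ bins.erase Bstar, ∑ i ∈ B, x i)) := by
            refine mul_le_mul_of_nonneg_left (mul_le_mul_of_nonneg_left ?_ hstarnn)
              (Real.exp_pos _).le
            rw [← hexp]; exact hprod
        _ = Real.exp (-a * (1 - ∑ i ∈ Bstar, x i)) * (1 - b * ∑ i ∈ Bstar, x i) := by
            rw [mul_comm (1 - b * ∑ i ∈ Bstar, x i), ← mul_assoc, ← Real.exp_add]
            congr 2
            have : ∑ B ∈ bins.erase Bstar, ∑ i ∈ B, x i
                = 1 - hH - ∑ i ∈ Bstar, x i := by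
              rw [hHdef]; linarith [htotal, hsplit]
            rw [this]; ring
    · refine ⟨0, le_refl _, zero_le_one, ?_⟩
      have hprod : ∏ B ∈ bins, (1 - b * ∑ i ∈ B, x i)
          ≤ ∏ B ∈ bins, Real.exp (-a * ∑ i ∈ B, x i) :=
        Finset.prod_le_prod (fun B hB => hbnn B hB)
          (fun B hB => hheavy' B hB (fun h => hBst (h ▸ hB)))
      have hexp : ∏ B ∈ bins, Real.exp (-a * ∑ i ∈ B, x i)
          = Real.exp (-a * ∑ B ∈ bins, ∑ i ∈ B, x i) := by
        rw [← Real.exp_sum, ← Finset.mul_sum]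
      calc Real.exp (-a * hH) * ∏ B ∈ bins, (1 - b * ∑ i ∈ B, x i)
          ≤ Real.exp (-a * hH) * Real.exp (-a * ∑ B ∈ bins, ∑ i ∈ B, x i) :=
            mul_le_mul_of_nonneg_left (hexp ▸ hprod) (Real.exp_pos _).le
        _ = Real.exp (-a * (1 - 0)) * (1 - b * 0) := by
            rw [← Real.exp_add]
            have : ∑ B ∈ bins, ∑ i ∈ B, x i = 1 - hH := by
              rw [hHdef]; linarith [htotal]
            rw [this]; ring_nf
  obtain ⟨y, hy0, hy1, hyle⟩ := hkey
  have hfin : Real.exp (-a * hH) * ∏ B ∈ bins, (1 - b * ∑ i ∈ B, x i)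
      ≤ Real.exp (-a + (a - b)/b) * (b/a) :=
    hyle.trans (key16 a b y hapos hbpos)
  have hconst : Real.exp (-1 - δ + (ε + δ) / (1 - ε)) * ((1 - ε) / (1 + δ))
      = Real.exp (-a + (a - b)/b) * (b/a) := by
    rw [ha, hb]; ring_nf
  rw [hsum, mul_one, hconst]
  have : Real.exp (-(1 + δ) * ∑ i ∈ H, x i)
      * ∏ B ∈ bins, (1 - (1 - ε) * ∑ i ∈ B, x i)
      = Real.exp (-a * hH) * ∏ B ∈ bins, (1 - b * ∑ i ∈ B, x i) := by
    rw [ha, hb, hHdef]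
  rw [this]
  linarith [hfin]
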